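/- arXiv:1612.07679 — 3 statements merged into one kernel-verified Lean document; each statement's English description precedes it below -/
import Mathlib

section
/- Let k be a field with |k| = q (possibly infinite) and t ≥ 1. The 2-Kronecker module I_t (with M₁ = k^{t+1}, M₂ = k^t and maps as in the standard presentation: α₁ the shift sending e_i to e'_{i+1}, α₂ sending e_i to e'_i) is a sum of bristle submodules (i.e., is generated by its submodules of length 2 with simple top) if and only if t + 1 ≤ q + 1, i.e., t ≤ q. More precisely, if J ⊆ k ∪ {∞} indexes bristle types B_c, then I_t is generated by bristles of types in J if and only if |J| ≥ t+1. -/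
open Function Submodule Set

variable (k : Type*) [Field k] (t : ℕ)

/-- `α₁` of the standard presentation of `I_t`: `e_i ↦ e'_{i+1}`, `e_t ↦ 0`. -/
noncomputable def ItA1 : (Fin (t + 1) → k) →ₗ[k] (Fin t → k) :=
  LinearMap.funLeft k k (Fin.castSucc)

/-- `α₂` of the standard presentation of `I_t`: `e_i ↦ e'_i`, `e₀ ↦ 0`. -/
noncomputable def ItA2 : (Fin (t + 1) → k) →ₗ[k] (Fin t → k) :=
  LinearMap.funLeft k k (Fin.succ)

/-- `u` generates in `I_t` a bristle submodule of type `B_c` (`j = some c`)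
respectively of type `B_∞` (`j = none`). -/
def IsBristleGen (j : Option k) (u : Fin (t + 1) → k) : Prop :=
  match j with
  | some c => ItA2 k t u = c • ItA1 k t u ∧ ItA1 k t u ≠ 0
  | none => ItA1 k t u = 0 ∧ ItA2 k t u ≠ 0

/-- `I_t` is generated by bristle submodules whose types lie in `J`. -/
def GenByBristles (J : Set (Option k)) : Prop :=
  span k {u | ∃ j ∈ J, IsBristleGen k t j u} = ⊤ ∧
    span k (ItA1 k t '' {u | ∃ j ∈ J, IsBristleGen k t j u} ∪
      ItA2 k t '' {u | ∃ j ∈ J, IsBristleGen k t j u}) = ⊤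

namespace ItBristleAux

variable {k : Type*} [Field k] {t : ℕ}

/-- The canonical generator of the bristle of type `j`. -/
noncomputable def brGen (k : Type*) [Field k] (t : ℕ) : Option k → (Fin (t + 1) → k)
  | some c => fun i => c ^ (i : ℕ)
  | none => fun i => if i = Fin.last t then 1 else 0

lemma itA1_apply (u : Fin (t + 1) → k) (i : Fin t) : ItA1 k t u i = u i.castSucc := rfl

lemma itA2_apply (u : Fin (t + 1) → k) (i : Fin t) : ItA2 k t u i = u i.succ := rfl

lemma isBristleGen_iff (ht : 1 ≤ t) (j : Option k) (u : Fin (t + 1) → k) :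
    IsBristleGen k t j u ↔ ∃ a : k, a ≠ 0 ∧ u = a • brGen k t j := by
  match j with
  | some c =>
    constructor
    · rintro ⟨h1, h2⟩
      have key : ∀ n (hn : n < t + 1), u ⟨n, hn⟩ = u 0 * c ^ n := by
        intro n
        induction n with
        | zero => intro hn; simp [show (⟨0, hn⟩ : Fin (t+1)) = 0 from rfl]
        | succ n ih =>
          intro hn
          have hn' : n < t := by omega
          have h := congrFun h1 ⟨n, hn'⟩
          rw [itA2_apply, Pi.smul_apply, itA1_apply, smul_eq_mul] at h
          have hs : (⟨n, hn'⟩ : Fin t).succ = ⟨n + 1, hn⟩ := rfl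
          have hcs : (⟨n, hn'⟩ : Fin t).castSucc = ⟨n, by omega⟩ := rfl
          rw [hs, hcs] at h
          rw [h, ih (by omega)]
          ring
      have key' : ∀ i : Fin (t + 1), u i = u 0 * c ^ (i : ℕ) := fun i => by
        simpa using key i i.isLt
      have h0 : u 0 ≠ 0 := by
        intro h0
        apply h2
        funext i
        rw [itA1_apply, key', h0, zero_mul, Pi.zero_apply]
      exact ⟨u 0, h0, funext fun i => by simp [brGen, key' i, smul_eq_mul]⟩
    · rintro ⟨a, ha, rfl⟩
      constructor
      · funext i
        simp only [itA2_apply, itA1_apply, Pi.smul_apply, smul_eq_mul, brGen,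
          Fin.val_succ, Fin.coe_castSucc, pow_succ]
        ring
      · intro h
        have := congrFun h ⟨0, ht⟩
        simp only [itA1_apply, brGen, Pi.smul_apply, smul_eq_mul, Pi.zero_apply] at this
        rw [show ((⟨0, ht⟩ : Fin t).castSucc : ℕ) = 0 from rfl, pow_zero, mul_one] at this
        exact ha this
  | none =>
    constructor
    · rintro ⟨h1, h2⟩
      have hz : ∀ i : Fin t, u i.castSucc = 0 := fun i => congrFun h1 i
      obtain ⟨i, hi⟩ : ∃ i : Fin t, u i.succ ≠ 0 := by
        by_contra h
        push_neg at h
        exact h2 (funext fun i => h i)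
      have hlast : u (Fin.last t) ≠ 0 := by
        rcases Fin.eq_castSucc_or_eq_last i.succ with ⟨j, hj⟩ | hj
        · rw [hj] at hi; exact absurd (hz j) hi
        · rwa [hj] at hi
      refine ⟨u (Fin.last t), hlast, funext fun i' => ?_⟩
      rcases Fin.eq_castSucc_or_eq_last i' with ⟨j, rfl⟩ | rfl
      · rw [hz j]
        simp [brGen, (Fin.castSucc_lt_last j).ne]
      · simp [brGen]
    · rintro ⟨a, ha, rfl⟩
      constructor
      · funext i
        simp only [itA1_apply, Pi.smul_apply, Pi.zero_apply]
        simp [brGen, (Fin.castSucc_lt_last i).ne]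
      · intro h
        have i0 : Fin t := ⟨t - 1, by omega⟩
        have := congrFun h (⟨t - 1, by omega⟩ : Fin t)
        simp only [itA2_apply, Pi.smul_apply, Pi.zero_apply] at this
        have hsucc : (⟨t - 1, by omega⟩ : Fin t).succ = Fin.last t := by
          ext; simp; omega
        rw [hsucc] at this
        simp [brGen] at this
        exact ha this

lemma brGen_isBristleGen (ht : 1 ≤ t) (j : Option k) :
    IsBristleGen k t j (brGen k t j) :=
  (isBristleGen_iff ht j _).2 ⟨1, one_ne_zero, (one_smul _ _).symm⟩

lemma span_genSet (ht : 1 ≤ t) (J : Set (Option k)) :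
    span k {u | ∃ j ∈ J, IsBristleGen k t j u} = span k (brGen k t '' J) := by
  apply le_antisymm
  · rw [span_le]
    rintro u ⟨j, hj, hu⟩
    rw [isBristleGen_iff ht] at hu
    obtain ⟨a, -, rfl⟩ := hu
    exact Submodule.smul_mem _ a (subset_span (mem_image_of_mem _ hj))
  · rw [span_le]
    rintro u ⟨j, hj, rfl⟩
    exact subset_span ⟨j, hj, brGen_isBristleGen ht j⟩

lemma vandermonde_span {n : ℕ} (c : Fin n → k) (hc : Injective c) :
    span k (Set.range (Matrix.vandermonde c)) = ⊤ := by
  rw [show Set.range (Matrix.vandermonde c) = Set.range (Matrix.vandermonde c).row from rfl,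
    ← range_vecMulLinear, LinearMap.range_eq_top, Matrix.coe_vecMulLinear]
  exact Matrix.vecMul_surjective_iff_isUnit.2
    ((Matrix.isUnit_iff_isUnit_det _).2
      (isUnit_iff_ne_zero.2 (Matrix.det_vandermonde_ne_zero_iff.2 hc)))

lemma exists_fun_of_encard_eq {α : Type*} {s : Set α} {n : ℕ} (h : s.encard = n) :
    ∃ f : Fin n → α, Injective f ∧ Set.range f = s := by
  have hfin : s.Finite := by
    rw [← Set.encard_ne_top_iff, h]; exact WithTop.coe_ne_top
  haveI := hfin.fintype
  have hcard : Fintype.card s = n := by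
    have := Set.encard_eq_coe_toFinset_card s
    rw [h] at this
    have := Nat.cast_injective (R := ℕ∞) this.symm
    rwa [Set.toFinset_card] at this
  let e : Fin n ≃ s := (Fintype.equivFinOfCardEq hcard).symm
  refine ⟨fun i => (e i : α), Subtype.val_injective.comp e.injective, ?_⟩
  have : Set.range (fun i => (e i : α)) = Subtype.val '' Set.range e := by
    rw [← Set.range_comp]; rfl
  rw [this, Equiv.range_eq_univ, Set.image_univ, Subtype.range_coe]

lemma eq_top_of_ker_le {M N : Type*} [AddCommGroup M] [Module k M] [AddCommGroup N]
    [Module k N] (φ : M →ₗ[k] N) (p : Submodule k M) (h1 : LinearMap.ker φ ≤ p)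
    (h2 : p.map φ = ⊤) : p = ⊤ := by
  rw [eq_top_iff]
  intro w _
  have hw : φ w ∈ p.map φ := h2 ▸ Submodule.mem_top
  obtain ⟨m, hm, hφ⟩ := hw
  have hker : w - m ∈ LinearMap.ker φ := by
    rw [LinearMap.mem_ker, map_sub, hφ, sub_self]
  have := add_mem (h1 hker) hm
  simpa using this

lemma itA1_brGen_some (a : k) (i : Fin t) :
    ItA1 k t (brGen k t (some a)) i = a ^ (i : ℕ) := by
  rw [itA1_apply]; simp [brGen]

lemma brGen_none_eq : brGen k t none = fun i => if i = Fin.last t then 1 else 0 := rfl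

lemma ker_itA1_le (p : Submodule k (Fin (t + 1) → k)) (hp : brGen k t none ∈ p) :
    LinearMap.ker (ItA1 k t) ≤ p := by
  intro u hu
  rw [LinearMap.mem_ker] at hu
  have hz : ∀ i : Fin t, u i.castSucc = 0 := fun i => congrFun hu i
  have : u = u (Fin.last t) • brGen k t none := by
    funext i
    rcases Fin.eq_castSucc_or_eq_last i with ⟨j, rfl⟩ | rfl
    · rw [hz j]; simp [brGen, (Fin.castSucc_lt_last j).ne]
    · simp [brGen]
  rw [this]
  exact Submodule.smul_mem _ _ hp

lemma span_brGen_top (ht : 1 ≤ t) {J : Set (Option k)}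
    (hJ : (t + 1 : ℕ∞) ≤ J.encard) : span k (brGen k t '' J) = ⊤ := by
  obtain ⟨J', hJ'sub, hJ'card⟩ := Set.exists_subset_encard_eq (by exact_mod_cast hJ :
    ((t + 1 : ℕ) : ℕ∞) ≤ J.encard)
  suffices h : span k (brGen k t '' J') = ⊤ by
    rw [eq_top_iff, ← h]
    exact span_mono (image_mono hJ'sub)
  by_cases hn : none ∈ J'
  · -- case `∞ ∈ J'`
    set K := {c : k | some c ∈ J'} with hK
    have hsome : some '' K = J' \ {none} := by
      ext j
      cases j with
      | none => simp [K]
      | some c => simp [K]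
    have hKcard : K.encard = t := by
      have h1 : (some '' K).encard = K.encard :=
        (Option.some_injective k).encard_image K
      rw [hsome, Set.encard_diff_singleton_of_mem hn, hJ'card] at h1
      rw [← h1, show ((t + 1 : ℕ) : ℕ∞) - 1 = ((t + 1 - 1 : ℕ) : ℕ∞) by
        rw [← Nat.cast_one (R := ℕ∞), ← ENat.coe_sub]]
      norm_num
    obtain ⟨c, hcinj, hcr⟩ := exists_fun_of_encard_eq hKcard
    apply eq_top_of_ker_le (ItA1 k t)
    · apply ker_itA1_le
      exact subset_span (mem_image_of_mem _ hn)
    · rw [Submodule.map_span, eq_top_iff, ← vandermonde_span c hcinj]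
      apply span_mono
      rintro v ⟨i, rfl⟩
      refine ⟨brGen k t (some (c i)), mem_image_of_mem _ ?_, ?_⟩
      · have : c i ∈ K := hcr ▸ Set.mem_range_self i
        exact this
      · funext j
        rw [itA1_brGen_some, Matrix.vandermonde_apply]
  · -- case `∞ ∉ J'`
    set K := {c : k | some c ∈ J'} with hK
    have hsome : some '' K = J' := by
      ext j
      cases j with
      | none => simp [K, hn]
      | some c => simp [K]
    have hKcard : K.encard = ((t + 1 : ℕ) : ℕ∞) := by
      have h1 : (some '' K).encard = K.encard :=
        (Option.some_injective k).encard_image K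
      rw [hsome, hJ'card] at h1
      exact h1.symm
    obtain ⟨c, hcinj, hcr⟩ := exists_fun_of_encard_eq hKcard
    rw [eq_top_iff, ← vandermonde_span c hcinj]
    apply span_mono
    rintro v ⟨i, rfl⟩
    refine ⟨some (c i), ?_, ?_⟩
    · have hk : c i ∈ K := hcr ▸ Set.mem_range_self i
      rw [← hsome]
      exact mem_image_of_mem _ hk
    · funext j
      simp [brGen, Matrix.vandermonde_apply]

lemma genByBristles_of (ht : 1 ≤ t) {J : Set (Option k)}
    (hJ : (t + 1 : ℕ∞) ≤ J.encard) : GenByBristles k t J := by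
  have hspan : span k {u | ∃ j ∈ J, IsBristleGen k t j u} = ⊤ := by
    rw [span_genSet ht]
    exact span_brGen_top ht hJ
  refine ⟨hspan, ?_⟩
  have hsurj : Surjective (ItA1 k t) :=
    LinearMap.funLeft_surjective_of_injective k k _ (Fin.castSucc_injective t)
  rw [eq_top_iff]
  calc (⊤ : Submodule k (Fin t → k))
      = LinearMap.range (ItA1 k t) := (LinearMap.range_eq_top.2 hsurj).symm
    _ = Submodule.map (ItA1 k t) ⊤ := (Submodule.map_top _).symm
    _ = Submodule.map (ItA1 k t) (span k {u | ∃ j ∈ J, IsBristleGen k t j u}) := by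
        rw [hspan]
    _ = span k (ItA1 k t '' {u | ∃ j ∈ J, IsBristleGen k t j u}) := Submodule.map_span _ _
    _ ≤ span k (ItA1 k t '' {u | ∃ j ∈ J, IsBristleGen k t j u} ∪
          ItA2 k t '' {u | ∃ j ∈ J, IsBristleGen k t j u}) :=
        span_mono Set.subset_union_left

lemma encard_of_gen (ht : 1 ≤ t) {J : Set (Option k)} (h : GenByBristles k t J) :
    (t + 1 : ℕ∞) ≤ J.encard := by
  by_contra hc
  push_neg at hc
  have hne : J.encard ≠ ⊤ := ne_top_of_lt hc
  have hfin : J.Finite := Set.encard_ne_top_iff.1 hne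
  haveI : Fintype J := hfin.fintype
  classical
  haveI : Fintype (brGen k t '' J) := (hfin.image _).fintype
  have hcard : (brGen k t '' J).toFinset.card < Module.finrank k (Fin (t + 1) → k) := by
    rw [Module.finrank_fintype_fun_eq_card, Fintype.card_fin]
    have h1 : (brGen k t '' J).toFinset.card ≤ J.toFinset.card := by
      rw [Set.toFinset_image]
      exact Finset.card_image_le
    have h2 : (J.toFinset.card : ℕ∞) < ((t + 1 : ℕ) : ℕ∞) := by
      rw [← Set.encard_eq_coe_toFinset_card]
      exact_mod_cast hc
    have h2' : J.toFinset.card < t + 1 := by exact_mod_cast h2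
    omega
  have hlt := span_lt_top_of_card_lt_finrank (R := k) hcard
  rw [← span_genSet ht, h.1] at hlt
  exact absurd rfl hlt.ne

end ItBristleAux

/-- The module `I_t` is generated by the bristles of the types in
`J ⊆ k ∪ {∞}` if and only if `|J| ≥ t+1`; in particular `I_t` is a sum of
bristle submodules if and only if `t ≤ q` where `q = |k|`. -/
theorem It_generated_by_bristles_iff (ht : 1 ≤ t) :
    (∀ J : Set (Option k), GenByBristles k t J ↔ (t + 1 : ℕ∞) ≤ J.encard) ∧
      (GenByBristles k t Set.univ ↔ (t : Cardinal) ≤ Cardinal.mk k) := by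
  have main : ∀ J : Set (Option k), GenByBristles k t J ↔ (t + 1 : ℕ∞) ≤ J.encard :=
    fun J => ⟨fun h => ItBristleAux.encard_of_gen ht h,
      fun h => ItBristleAux.genByBristles_of ht h⟩
  refine ⟨main, ?_⟩
  rw [main Set.univ, Set.encard_univ]
  have hcardopt : ENat.card (Option k) = Cardinal.toENat (Cardinal.mk k) + 1 := by
    rw [ENat.card, Cardinal.mk_option, map_add, map_one]
  rw [hcardopt]
  have h1 : (t + 1 : ℕ∞) = (t : ℕ∞) + 1 := by push_cast; ring
  rw [h1, ENat.add_le_add_iff_right (by simp : (1 : ℕ∞) ≠ ⊤)]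
  exact Cardinal.natCast_le_toENat_iff
end

section
/- Let Λ be an artin algebra and M an indecomposable bristled module (a quotient of a direct sum of length-2 modules). Then the socle of M is homogeneous: all simple submodules of M are isomorphic to each other. -/
open Order

variable (R M : Type*) [Ring R] [AddCommGroup M] [Module R M]

/-- The (composition) length of a module: the length of a longest chain of
submodules. -/
noncomputable def moduleLength : WithBot ℕ∞ := Order.krullDim (Submodule R M)

/-- A module is bristled if it is generated by modules of length 2;
equivalently, it is the sum of its submodules of length at most 2. -/
def IsBristled : Prop :=
  sSup {N : Submodule R M | moduleLength R N ≤ 2} = ⊤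

/-- An indecomposable module: nonzero, with no nontrivial direct decomposition. -/
def ModIndec : Prop :=
  Nontrivial M ∧ ∀ N N' : Submodule R M, IsCompl N N' → N = ⊥ ∨ N' = ⊥

/- ### Auxiliary lattice lemmas -/

section LatticeAux
variable {α : Type*} [CompleteLattice α] [IsModularLattice α]

lemma sSupIndep_insert_of_disjoint' {s : Set α} {a : α}
    (hs : sSupIndep s) (ha : Disjoint a (sSup s)) (hans : a ∉ s) :
    sSupIndep (insert a s) := by
  intro b hb
  rcases Set.mem_insert_iff.mp hb with rfl | hbs
  · refine ha.mono_right (sSup_le_sSup ?_)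
    intro x hx
    exact Set.mem_of_mem_insert_of_ne hx.1 hx.2
  · have hab : a ≠ b := by rintro rfl; exact hans hbs
    have hset : insert a s \ {b} = insert a (s \ {b}) := by
      ext x
      simp only [Set.mem_diff, Set.mem_insert_iff, Set.mem_singleton_iff]
      constructor
      · rintro ⟨rfl | hx, hxb⟩
        · exact Or.inl rfl
        · exact Or.inr ⟨hx, hxb⟩
      · rintro (rfl | ⟨hx, hxb⟩)
        · exact ⟨Or.inl rfl, hab⟩
        · exact ⟨Or.inr hx, hxb⟩
    rw [hset, sSup_insert]
    have h1 : Disjoint b (sSup (s \ {b})) := hs hbs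
    have h2 : Disjoint (b ⊔ sSup (s \ {b})) a := by
      refine (ha.mono_right ?_).symm
      exact sup_le (le_sSup hbs) (sSup_le_sSup Set.diff_subset)
    have h3 := h1.disjoint_sup_right_of_disjoint_sup_left h2
    rwa [sup_comm] at h3

lemma disjoint_finsetSup_sdiff' [DecidableEq α] {t : Finset α}
    (hind : sSupIndep (↑t : Set α)) :
    ∀ u : Finset α, u ⊆ t → Disjoint (u.sup id) ((t \ u).sup id) := by
  classical
  intro u
  induction u using Finset.induction_on with
  | empty => intro _; simp
  | @insert a u' ha IH =>
    intro hsub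
    have hat : a ∈ t := hsub (Finset.mem_insert_self a u')
    have hu't : u' ⊆ t := (Finset.subset_insert a u').trans hsub
    have h1 : Disjoint (u'.sup id) ((t \ insert a u').sup id) :=
      (IH hu't).mono_right
        (Finset.sup_mono (Finset.sdiff_subset_sdiff (le_refl t) (Finset.subset_insert a u')))
    have hle : (u'.sup id) ⊔ ((t \ insert a u').sup id) ≤ sSup ((↑t : Set α) \ {a}) := by
      apply sup_le <;> refine Finset.sup_le fun b hb => le_sSup ?_
      · exact ⟨hu't hb, fun h => ha (h ▸ hb)⟩
      · have hb' := Finset.mem_sdiff.mp hb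
        exact ⟨hb'.1, fun h => hb'.2 (h ▸ Finset.mem_insert_self a u')⟩
    have h2 : Disjoint a ((u'.sup id) ⊔ ((t \ insert a u').sup id)) :=
      (hind.disjoint_sSup (by exact_mod_cast hat) Set.diff_subset (by simp)).mono_right hle
    rw [Finset.sup_insert]
    exact h1.disjoint_sup_left_of_disjoint_sup_right h2

lemma exists_sSupIndep_subset_sSup_eq_top' [IsCompactlyGenerated α] {A : Set α}
    (hA : ∀ a ∈ A, IsAtom a) (htop : sSup A = ⊤) :
    ∃ s : Set α, s ⊆ A ∧ sSupIndep s ∧ sSup s = ⊤ := by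
  classical
  have hub : ∀ c ⊆ {s : Set α | s ⊆ A ∧ sSupIndep s}, IsChain (· ⊆ ·) c →
      ∃ ub ∈ {s : Set α | s ⊆ A ∧ sSupIndep s}, ∀ s ∈ c, s ⊆ ub := by
    intro c hcS hchain
    refine ⟨⋃₀ c, ⟨?_, iSupIndep_sUnion_of_directed hchain.directedOn fun s hsc => (hcS hsc).2⟩,
      fun s hsc => Set.subset_sUnion_of_mem hsc⟩
    exact Set.sUnion_subset fun s hsc => (hcS hsc).1
  obtain ⟨s, hs⟩ := zorn_subset {s : Set α | s ⊆ A ∧ sSupIndep s} hub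
  refine ⟨s, hs.prop.1, hs.prop.2, ?_⟩
  by_contra hne
  have hnot : ¬ sSup A ≤ sSup s := fun h => hne (top_le_iff.mp (htop ▸ h))
  have hex : ∃ a ∈ A, ¬ a ≤ sSup s := by
    by_contra hc
    push_neg at hc
    exact hnot (sSup_le hc)
  obtain ⟨a, haA, hale⟩ := hex
  have hdisj : Disjoint a (sSup s) := by
    rcases (hA a haA).le_iff.mp (inf_le_left : a ⊓ sSup s ≤ a) with h | h
    · exact disjoint_iff.mpr h
    · exact absurd (inf_eq_left.mp h) hale
  have hans : a ∉ s := fun h => hale (le_sSup h)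
  have hmem : insert a s ∈ {s : Set α | s ⊆ A ∧ sSupIndep s} :=
    ⟨Set.insert_subset haA hs.prop.1, sSupIndep_insert_of_disjoint' hs.prop.2 hdisj hans⟩
  have hins : insert a s ⊆ s := hs.2 hmem (Set.subset_insert a s)
  exact hans (hins (Set.mem_insert a s))

end LatticeAux

/- ### Auxiliary module lemmas -/

section ModuleAux
variable {R₀ M₀ : Type*} [Ring R₀] [AddCommGroup M₀] [Module R₀ M₀]

lemma not_moduleLength_le_two_of_chain {B x y : Submodule R₀ M₀} (hx : ⊥ < x) (hxy : x < y)
    (hyB : y < B) : ¬ moduleLength R₀ B ≤ 2 := by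
  intro h
  let e := (Submodule.MapSubtype.orderIso B).symm
  have hxB : x ≤ B := (hxy.trans hyB).le
  have hyB' : y ≤ B := hyB.le
  let p : LTSeries (Submodule R₀ B) :=
    { length := 3
      toFun := ![e ⟨⊥, bot_le⟩, e ⟨x, hxB⟩, e ⟨y, hyB'⟩, e ⟨B, le_rfl⟩]
      step := by
        intro i
        fin_cases i
        · exact e.strictMono (Subtype.mk_lt_mk.mpr hx)
        · exact e.strictMono (Subtype.mk_lt_mk.mpr hxy)
        · exact e.strictMono (Subtype.mk_lt_mk.mpr hyB) }
  have h3 := Order.LTSeries.length_le_krullDim p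
  have hcontra : ((3 : ℕ) : WithBot ℕ∞) ≤ 2 := h3.trans h
  norm_num at hcontra

lemma bristle_inf_atom {s B : Submodule R₀ M₀} (hlen : moduleLength R₀ B ≤ 2)
    (hBs : ¬ B ≤ s) (hne : B ⊓ s ≠ ⊥) : IsAtom (B ⊓ s) := by
  constructor
  · exact hne
  · intro x hx
    by_contra hx0
    have h1 : B ⊓ s < B := lt_of_le_of_ne inf_le_left (fun h => hBs (h ▸ inf_le_right))
    exact not_moduleLength_le_two_of_chain (bot_lt_iff_ne_bot.mpr hx0) hx h1 hlen

lemma bristle_map_atom {s B : Submodule R₀ M₀} (hlen : moduleLength R₀ B ≤ 2)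
    (hBs : ¬ B ≤ s) (hne : B ⊓ s ≠ ⊥) : IsAtom (B.map s.mkQ) := by
  constructor
  · intro h
    refine hBs fun b hb => ?_
    have hmem : s.mkQ b ∈ B.map s.mkQ := Submodule.mem_map_of_mem hb
    rw [h, Submodule.mem_bot, Submodule.mkQ_apply] at hmem
    exact (Submodule.Quotient.mk_eq_zero s).mp hmem
  · intro W hW
    by_contra hW0
    set V : Submodule R₀ M₀ := (W.comap s.mkQ) ⊓ B with hV
    have hsle : s ≤ W.comap s.mkQ := by
      intro x hx
      show s.mkQ x ∈ W
      rw [Submodule.mkQ_apply, (Submodule.Quotient.mk_eq_zero s).mpr hx]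
      exact W.zero_mem
    have h1 : B ⊓ s ≤ V := le_inf (inf_le_right.trans hsle) inf_le_left
    have hmapV : V.map s.mkQ = W ⊓ B.map s.mkQ := by
      ext z
      simp only [Submodule.mem_map, Submodule.mem_inf, Submodule.mem_comap]
      constructor
      · rintro ⟨b, ⟨hbW, hbB⟩, rfl⟩
        exact ⟨hbW, b, hbB, rfl⟩
      · rintro ⟨hzW, b, hbB, rfl⟩
        exact ⟨b, ⟨hzW, hbB⟩, rfl⟩
    have h2 : B ⊓ s ≠ V := by
      intro h
      have hVs : V ≤ s := h ▸ inf_le_right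
      have hbotmap : V.map s.mkQ = ⊥ := by
        rw [eq_bot_iff]
        rintro z ⟨b, hbV, rfl⟩
        rw [Submodule.mem_bot, Submodule.mkQ_apply]
        exact (Submodule.Quotient.mk_eq_zero s).mpr (hVs hbV)
      rw [hmapV, inf_eq_left.mpr hW.le] at hbotmap
      exact hW0 hbotmap
    have h3 : V < B := by
      refine lt_of_le_of_ne inf_le_right fun h => ?_
      have hcm : B ≤ W.comap s.mkQ := h ▸ inf_le_left
      exact hW.not_ge (Submodule.map_le_iff_le_comap.mpr hcm)
    have h0 : ⊥ < B ⊓ s := bot_lt_iff_ne_bot.mpr hne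
    exact not_moduleLength_le_two_of_chain h0 (lt_of_le_of_ne h1 h2) h3 hlen

lemma atom_fg {A : Submodule R₀ M₀} (hA : IsAtom A) : A.FG := by
  obtain ⟨x, hxA, hx0⟩ := Submodule.exists_mem_ne_zero_of_ne_bot hA.1
  refine ⟨{x}, ?_⟩
  rw [Finset.coe_singleton]
  rcases hA.le_iff.mp (Submodule.span_le.mpr (Set.singleton_subset_iff.mpr hxA)) with h | h
  · exact absurd (Submodule.span_singleton_eq_bot.mp h) hx0
  · exact h

lemma atom_equiv_of_le_finsetSup (F : Finset (Submodule R₀ M₀)) (hF : ∀ B ∈ F, IsAtom B)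
    (A : Submodule R₀ M₀) (hA : IsAtom A) (hle : A ≤ F.sup id) :
    ∃ B ∈ F, Nonempty ((↥A) ≃ₗ[R₀] (↥B)) := by
  classical
  induction F using Finset.induction_on with
  | empty => exact absurd (le_bot_iff.mp (by simpa using hle)) hA.1
  | @insert B F' hBF IH =>
    rw [Finset.sup_insert] at hle
    simp only [id_eq] at hle
    set X := F'.sup id with hX
    by_cases hAX : A ≤ X
    · obtain ⟨C, hC, hiso⟩ := IH (fun C hC => hF C (Finset.mem_insert_of_mem hC)) hAX
      exact ⟨C, Finset.mem_insert_of_mem hC, hiso⟩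
    have hBatom : IsAtom B := hF B (Finset.mem_insert_self B F')
    by_cases hBX : B ≤ X
    · exact absurd (hle.trans (sup_le hBX le_rfl)) hAX
    have hdisjXB : X ⊓ B = ⊥ := by
      rcases hBatom.le_iff.mp (inf_le_right : X ⊓ B ≤ B) with h | h
      · exact h
      · exact absurd (inf_eq_right.mp h) hBX
    have hdisjAX : A ⊓ X = ⊥ := by
      rcases hA.le_iff.mp (inf_le_left : A ⊓ X ≤ A) with h | h
      · exact h
      · exact absurd (inf_eq_left.mp h) hAX
    set N : Submodule R₀ M₀ := X ⊔ B with hN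
    have hXN : X ≤ N := le_sup_left
    have hBN : B ≤ N := le_sup_right
    have hAN : A ≤ N := hle.trans (le_of_eq (sup_comm B X))
    set X' : Submodule R₀ (↥N) := X.comap N.subtype with hX'
    set B' : Submodule R₀ (↥N) := B.comap N.subtype with hB'
    have hcompl : IsCompl B' X' := by
      constructor
      · rw [disjoint_iff, ← Submodule.comap_inf, inf_comm, hdisjXB, Submodule.comap_bot,
          Submodule.ker_subtype]
      · rw [codisjoint_iff, eq_top_iff]
        rintro ⟨n, hn⟩ -
        rcases Submodule.mem_sup.mp (hN ▸ hn : n ∈ X ⊔ B) with ⟨x, hx, b, hb, hxb⟩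
        refine Submodule.mem_sup.mpr ⟨⟨b, hBN hb⟩, hb, ⟨x, hXN hx⟩, hx, ?_⟩
        exact Subtype.ext (by simpa [add_comm] using hxb)
    let proj : (↥N) →ₗ[R₀] (↥B') := Submodule.projectionOnto B' X' hcompl
    let φ : (↥A) →ₗ[R₀] (↥B') := proj.comp (Submodule.inclusion hAN)
    have hinj : Function.Injective φ := by
      intro a a' haa'
      have h0 : φ (a - a') = 0 := by rw [map_sub, haa', sub_self]
      have hker : (Submodule.inclusion hAN) (a - a') ∈
          LinearMap.ker (Submodule.projectionOnto B' X' hcompl) := h0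
      rw [Submodule.ker_projectionOnto] at hker
      have hXmem : ((a - a' : ↥A) : M₀) ∈ X := hker
      have hAmem : ((a - a' : ↥A) : M₀) ∈ A := (a - a').2
      have hmem : ((a - a' : ↥A) : M₀) ∈ A ⊓ X := ⟨hAmem, hXmem⟩
      rw [hdisjAX, Submodule.mem_bot] at hmem
      exact sub_eq_zero.mp (Subtype.ext (by simpa using hmem))
    haveI hBsimple : IsSimpleModule R₀ (↥B) := isSimpleModule_iff_isAtom.mpr hBatom
    haveI hB'simple : IsSimpleModule R₀ (↥B') :=
      IsSimpleModule.congr (Submodule.comapSubtypeEquivOfLe hBN)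
    have hsurj : Function.Surjective φ := by
      rw [← LinearMap.range_eq_top]
      rcases eq_bot_or_eq_top (LinearMap.range φ) with h | h
      · exfalso
        obtain ⟨x, hxA, hx0⟩ := Submodule.exists_mem_ne_zero_of_ne_bot hA.1
        have hmem : φ ⟨x, hxA⟩ ∈ LinearMap.range φ := LinearMap.mem_range_self φ _
        rw [h, Submodule.mem_bot] at hmem
        have hz : (⟨x, hxA⟩ : ↥A) = 0 := hinj (by simpa using hmem)
        exact hx0 (by simpa using congrArg Subtype.val hz)
      · exact h
    exact ⟨B, Finset.mem_insert_self B F',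
      ⟨(LinearEquiv.ofBijective φ ⟨hinj, hsurj⟩).trans (Submodule.comapSubtypeEquivOfLe hBN)⟩⟩

end ModuleAux

/-- The socle of an indecomposable bristled module over an artin algebra is
homogeneous: all its simple submodules are isomorphic. -/
theorem socle_homogeneous (R M : Type*) [Ring R] [IsArtinianRing R]
    [AddCommGroup M] [Module R M] [Module.Finite R M]
    (hind : ModIndec R M) (hbr : IsBristled R M) :
    ∀ S T : Submodule R M, IsSimpleModule R S → IsSimpleModule R T →
      Nonempty (S ≃ₗ[R] T) := by
  classical
  intro S T hS hT
  by_contra hiso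
  have hind' : Nontrivial M ∧ ∀ N N' : Submodule R M, IsCompl N N' → N = ⊥ ∨ N' = ⊥ := hind
  have hbr' : sSup {N : Submodule R M | moduleLength R N ≤ 2} = ⊤ := hbr
  haveI hart : IsArtinian R M := isArtinian_of_fg_of_artinian'
  haveI : IsAtomic (Submodule R M) := isAtomic_of_orderBot_wellFounded_lt wellFounded_lt
  set soc : Submodule R M := sSup {A : Submodule R M | IsAtom A} with hsocdef
  have hatom_le_soc : ∀ A : Submodule R M, IsAtom A → A ≤ soc := fun A hA => le_sSup hA
  set q : Submodule R M → Prop := fun A => Nonempty ((↥A) ≃ₗ[R] (↥S)) with hqdef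
  set socS : Submodule R M := sSup {A | IsAtom A ∧ q A} with hsocS
  set socN : Submodule R M := sSup {A | IsAtom A ∧ ¬ q A} with hsocN
  have hS_atom : IsAtom S := isSimpleModule_iff_isAtom.mp hS
  have hT_atom : IsAtom T := isSimpleModule_iff_isAtom.mp hT
  have hSle : S ≤ socS := le_sSup ⟨hS_atom, ⟨LinearEquiv.refl R S⟩⟩
  have hTle : T ≤ socN := le_sSup ⟨hT_atom, fun h => h.elim fun e => hiso ⟨e.symm⟩⟩
  have hsocS_le : socS ≤ soc := sSup_le fun A hA => le_sSup hA.1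
  have hsocN_le : socN ≤ soc := sSup_le fun A hA => le_sSup hA.1
  have hsoc_eq : socS ⊔ socN = soc := by
    apply le_antisymm (sup_le hsocS_le hsocN_le)
    refine sSup_le fun A hA => ?_
    by_cases hq : q A
    · exact (le_sSup (show A ∈ {A | IsAtom A ∧ q A} from ⟨hA, hq⟩)).trans le_sup_left
    · exact (le_sSup (show A ∈ {A | IsAtom A ∧ ¬ q A} from ⟨hA, hq⟩)).trans le_sup_right
  -- every atom below a sup of atoms is isomorphic to one of them
  have hiso_of_le : ∀ (𝒮 : Set (Submodule R M)), (∀ B ∈ 𝒮, IsAtom B) →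
      ∀ A : Submodule R M, IsAtom A → A ≤ sSup 𝒮 →
      ∃ B ∈ 𝒮, Nonempty ((↥A) ≃ₗ[R] (↥B)) := by
    intro 𝒮 h𝒮 A hA hle
    have hc : IsCompactElement A := (Submodule.fg_iff_compact A).mp (atom_fg hA)
    obtain ⟨F, hF𝒮, hAF⟩ :=
      (CompleteLattice.isCompactElement_iff_exists_le_sSup_of_le_sSup _ A).mp hc 𝒮 hle
    obtain ⟨B, hBF, hisoB⟩ :=
      atom_equiv_of_le_finsetSup F (fun B hB => h𝒮 B (hF𝒮 hB)) A hA hAF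
    exact ⟨B, hF𝒮 hBF, hisoB⟩
  have hdisjSN : Disjoint socS socN := by
    rw [disjoint_iff]
    by_contra hne
    obtain ⟨A, hA, hAle⟩ := (eq_bot_or_exists_atom_le (socS ⊓ socN)).resolve_left hne
    obtain ⟨B1, hB1, hiso1⟩ := hiso_of_le _ (fun B hB => hB.1) A hA (hAle.trans inf_le_left)
    obtain ⟨B2, hB2, hiso2⟩ := hiso_of_le _ (fun B hB => hB.1) A hA (hAle.trans inf_le_right)
    exact hB2.2 (hiso2.elim fun e2 => hB1.2.elim fun f1 => hiso1.elim fun e1 =>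
      ⟨e2.symm.trans (e1.trans f1)⟩)
  -- the quotient by the socle
  set π := soc.mkQ with hπdef
  have hmapbot : ∀ W : Submodule R M, W ≤ soc → W.map π = ⊥ := by
    intro W hWle
    rw [eq_bot_iff]
    rintro z ⟨x, hx, rfl⟩
    rw [Submodule.mem_bot, hπdef, Submodule.mkQ_apply]
    exact (Submodule.Quotient.mk_eq_zero soc).mpr (hWle hx)
  have hBinfne : ∀ B : Submodule R M, ¬ B ≤ soc → B ⊓ soc ≠ ⊥ := by
    intro B hB h
    rcases eq_bot_or_exists_atom_le B with rfl | ⟨A, hA, hAB⟩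
    · exact hB bot_le
    · have hle : A ≤ B ⊓ soc := le_inf hAB (hatom_le_soc A hA)
      exact hA.1 (le_bot_iff.mp (h ▸ hle))
  set 𝒜 : Set (Submodule R (M ⧸ soc)) :=
    {a | IsAtom a ∧ ∃ B : Submodule R M, moduleLength R B ≤ 2 ∧ ¬ B ≤ soc ∧ B.map π = a}
    with h𝒜def
  have h𝒜atoms : ∀ a ∈ 𝒜, IsAtom a := fun a ha => ha.1
  have h𝒜top : sSup 𝒜 = ⊤ := by
    apply top_le_iff.mp
    have hmaptop : Submodule.map π (sSup {N : Submodule R M | moduleLength R N ≤ 2}) = ⊤ := by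
      rw [hbr', Submodule.map_top, hπdef, Submodule.range_mkQ]
    rw [(Submodule.gc_map_comap π).l_sSup] at hmaptop
    rw [← hmaptop]
    refine iSup₂_le fun B hB => ?_
    by_cases hBs : B ≤ soc
    · rw [hmapbot B hBs]
      exact bot_le
    · exact le_sSup ⟨bristle_map_atom hB hBs (hBinfne B hBs), B, hB, hBs, rfl⟩
  -- select an independent family of atoms in the quotient
  obtain ⟨sA, hsA𝒜, hsAind, hsAtop⟩ := exists_sSupIndep_subset_sSup_eq_top' h𝒜atoms h𝒜top
  haveI : IsArtinian R (M ⧸ soc) := inferInstance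
  have hsAfin : sA.Finite := WellFoundedLT.finite_of_sSupIndep hsAind
  set t : Finset (Submodule R (M ⧸ soc)) := hsAfin.toFinset with htdef
  have htcoe : (↑t : Set (Submodule R (M ⧸ soc))) = sA := hsAfin.coe_toFinset
  have htind : sSupIndep (↑t : Set (Submodule R (M ⧸ soc))) := htcoe ▸ hsAind
  have httop : t.sup id = ⊤ := by
    rw [Finset.sup_id_eq_sSup, htcoe, hsAtop]
  have hchoice : ∀ a ∈ t, ∃ B : Submodule R M,
      moduleLength R B ≤ 2 ∧ ¬ B ≤ soc ∧ B.map π = a := by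
    intro a ha
    exact (hsA𝒜 (htcoe ▸ Finset.mem_coe.mpr ha)).2
  choose! f hf1 hf2 hf3 using hchoice
  have hfatom : ∀ a ∈ t, IsAtom (f a ⊓ soc) := fun a ha =>
    bristle_inf_atom (hf1 a ha) (hf2 a ha) (hBinfne _ (hf2 a ha))
  set t1 : Finset (Submodule R (M ⧸ soc)) := t.filter (fun a => q (f a ⊓ soc)) with ht1def
  have ht1sub : t1 ⊆ t := Finset.filter_subset _ _
  set t2 : Finset (Submodule R (M ⧸ soc)) := t \ t1 with ht2def
  have ht2sub : t2 ⊆ t := Finset.sdiff_subset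
  have hfS : ∀ a ∈ t1, f a ⊓ soc ≤ socS := fun a ha =>
    le_sSup ⟨hfatom a (ht1sub ha), (Finset.mem_filter.mp ha).2⟩
  have hfN : ∀ a ∈ t2, f a ⊓ soc ≤ socN := by
    intro a ha
    have hat : a ∈ t := ht2sub ha
    have hnq : ¬ q (f a ⊓ soc) := by
      have hmem := Finset.mem_sdiff.mp ha
      intro hq
      exact hmem.2 (Finset.mem_filter.mpr ⟨hmem.1, hq⟩)
    exact le_sSup ⟨hfatom a hat, hnq⟩
  set Y : Submodule R M := socS ⊔ t1.sup f with hYdef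
  set Z : Submodule R M := socN ⊔ t2.sup f with hZdef
  have hmap_sup : ∀ u : Finset (Submodule R (M ⧸ soc)), u ⊆ t →
      (u.sup f).map π = u.sup id := by
    intro u hu
    rw [Finset.comp_sup_eq_sup_comp (fun B : Submodule R M => B.map π)
      (fun p p' => Submodule.map_sup p p' π) (Submodule.map_bot π)]
    exact Finset.sup_congr rfl fun a ha => hf3 a (hu ha)
  have hYmap : Y.map π = t1.sup id := by
    rw [hYdef, Submodule.map_sup, hmapbot socS hsocS_le, hmap_sup t1 ht1sub, bot_sup_eq]
  have hZmap : Z.map π = t2.sup id := by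
    rw [hZdef, Submodule.map_sup, hmapbot socN hsocN_le, hmap_sup t2 ht2sub, bot_sup_eq]
  -- the key intersection bound
  have hkey : ∀ socW : Submodule R M, socW ≤ soc →
      ∀ tW : Finset (Submodule R (M ⧸ soc)), tW ⊆ t → (∀ a ∈ tW, f a ⊓ soc ≤ socW) →
      ∀ u : Finset (Submodule R (M ⧸ soc)), u ⊆ tW → (socW ⊔ u.sup f) ⊓ soc ≤ socW := by
    intro socW hWle tW htW hWf u
    induction u using Finset.induction_on with
    | empty =>
      intro _
      rw [Finset.sup_empty, sup_bot_eq]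
      exact inf_le_left
    | @insert a u' hau IH =>
      intro hsub
      have hatW : a ∈ tW := hsub (Finset.mem_insert_self a u')
      have hat : a ∈ t := htW hatW
      have hu' : u' ⊆ tW := (Finset.subset_insert a u').trans hsub
      intro x hx
      rw [Finset.sup_insert] at hx
      have hx1 : x ∈ (socW ⊔ u'.sup f) ⊔ f a := by
        have hx' := hx.1
        rwa [sup_comm (f a) (u'.sup f), ← sup_assoc] at hx'
      obtain ⟨y, hy, b, hb, rfl⟩ := Submodule.mem_sup.mp hx1
      have hxsoc : y + b ∈ soc := hx.2
      have hπy : π y ∈ u'.sup id := by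
        have hmem : π y ∈ (socW ⊔ u'.sup f).map π := Submodule.mem_map_of_mem hy
        rwa [Submodule.map_sup, hmapbot socW hWle, hmap_sup u' (hu'.trans htW),
          bot_sup_eq] at hmem
      have hπb : π b ∈ a := by
        rw [← hf3 a hat]
        exact Submodule.mem_map_of_mem hb
      have hπsum : π y + π b = 0 := by
        rw [← map_add, hπdef, Submodule.mkQ_apply]
        exact (Submodule.Quotient.mk_eq_zero soc).mpr hxsoc
      have hπb0 : π b = 0 := by
        have hdisj : Disjoint a (u'.sup id) := by
          have hone : Disjoint a (sSup (sA \ {a})) :=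
            hsAind (htcoe ▸ Finset.mem_coe.mpr hat)
          refine hone.mono_right ?_
          refine Finset.sup_le fun c hc => le_sSup ?_
          have hct : c ∈ t := htW (hu' hc)
          have hca : c ≠ a := fun h => hau (h ▸ hc)
          exact ⟨htcoe ▸ Finset.mem_coe.mpr hct, hca⟩
        have hmem2 : π b ∈ a ⊓ u'.sup id := by
          refine ⟨hπb, ?_⟩
          have hbn : π b = - π y := eq_neg_of_add_eq_zero_right hπsum
          rw [hbn]
          exact Submodule.neg_mem _ hπy
        rw [disjoint_iff.mp hdisj, Submodule.mem_bot] at hmem2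
        exact hmem2
      have hbsoc : b ∈ f a ⊓ soc := by
        refine ⟨hb, ?_⟩
        refine (Submodule.Quotient.mk_eq_zero soc).mp ?_
        rw [← Submodule.mkQ_apply, ← hπdef]
        exact hπb0
      have hbW : b ∈ socW := hWf a hatW hbsoc
      have hysoc : y ∈ soc := by
        have hyy : y = (y + b) - b := by rw [add_sub_cancel_right]
        rw [hyy]
        exact Submodule.sub_mem _ hxsoc (hWle hbW)
      have hyW : y ∈ socW := IH hu' ⟨hy, hysoc⟩
      exact Submodule.add_mem _ hyW hbW
  have hYsoc : Y ⊓ soc ≤ socS := hkey socS hsocS_le t1 ht1sub hfS t1 (subset_refl _)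
  have hZsoc : Z ⊓ soc ≤ socN := hkey socN hsocN_le t2 ht2sub hfN t2 (subset_refl _)
  have hdisjYZ : Disjoint Y Z := by
    rw [disjoint_iff, eq_bot_iff]
    intro x hx
    have hxsoc : x ∈ soc := by
      have h1 : π x ∈ Y.map π := Submodule.mem_map_of_mem hx.1
      have h2 : π x ∈ Z.map π := Submodule.mem_map_of_mem hx.2
      rw [hYmap] at h1
      rw [hZmap] at h2
      have hd : Disjoint (t1.sup id) (t2.sup id) := disjoint_finsetSup_sdiff' htind t1 ht1sub
      have hmem : π x ∈ t1.sup id ⊓ t2.sup id := ⟨h1, h2⟩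
      rw [disjoint_iff.mp hd, Submodule.mem_bot] at hmem
      refine (Submodule.Quotient.mk_eq_zero soc).mp ?_
      rw [← Submodule.mkQ_apply, ← hπdef]
      exact hmem
    have hxS : x ∈ socS := hYsoc ⟨hx.1, hxsoc⟩
    have hxN : x ∈ socN := hZsoc ⟨hx.2, hxsoc⟩
    have hmem : x ∈ socS ⊓ socN := ⟨hxS, hxN⟩
    rwa [disjoint_iff.mp hdisjSN] at hmem
  have hsupYZ : Y ⊔ Z = ⊤ := by
    have hsocle : soc ≤ Y ⊔ Z := by
      rw [← hsoc_eq]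
      exact sup_le (le_sup_left.trans (le_sup_left : Y ≤ Y ⊔ Z))
        (le_sup_left.trans (le_sup_right : Z ≤ Y ⊔ Z))
    have hmapYZ : (Y ⊔ Z).map π = ⊤ := by
      rw [Submodule.map_sup, hYmap, hZmap, ← Finset.sup_union,
        Finset.union_sdiff_of_subset ht1sub, httop]
    have hcm := Submodule.comap_map_eq π (Y ⊔ Z)
    rw [hmapYZ, Submodule.comap_top, hπdef, Submodule.ker_mkQ] at hcm
    rw [sup_eq_left.mpr hsocle] at hcm
    exact hcm.symm
  rcases hind'.2 Y Z ⟨hdisjYZ, codisjoint_iff.mpr hsupYZ⟩ with h | h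
  · exact hS_atom.1 (le_bot_iff.mp ((hSle.trans le_sup_left).trans h.le))
  · exact hT_atom.1 (le_bot_iff.mp ((hTle.trans le_sup_left).trans h.le))
end

section
/- Let Λ be a hereditary artin algebra and N a class of Λ-modules. Then the class of Λ-modules M that are both generated by N (quotients of direct sums of modules in N) and N-saturated (Ext¹(N, M) = 0 for all N in the class) is closed under quotient modules and under extensions. -/
open Function

universe u

variable (R : Type u) [Ring R]

/-- A ring is (left) hereditary if every submodule of a projective module is
projective. -/
def IsHereditaryRing : Prop :=
  ∀ (P : ModuleCat.{u} R), Module.Projective R P →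
    ∀ S : Submodule R P, Module.Projective R S

/-- `M` is generated by the class `𝒩`: it is a quotient of a finite direct sum
of modules from `𝒩`. -/
def GeneratedByClass (𝒩 : Set (ModuleCat.{u} R)) (M : ModuleCat.{u} R) : Prop :=
  ∃ (ι : Type u) (_ : Fintype ι) (X : ι → ModuleCat.{u} R),
    (∀ i, X i ∈ 𝒩) ∧ ∃ f : (∀ i, X i) →ₗ[R] M, Surjective f

/-- `M` is `𝒩`-saturated: `Ext¹(N, M) = 0` for all `N ∈ 𝒩`, i.e. every short
exact sequence `0 → M → E → N → 0` splits. -/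
def SaturatedFor (𝒩 : Set (ModuleCat.{u} R)) (M : ModuleCat.{u} R) : Prop :=
  ∀ N ∈ 𝒩, ∀ (E : ModuleCat.{u} R) (i : M →ₗ[R] E) (p : E →ₗ[R] N),
    Injective i → Surjective p → LinearMap.range i = LinearMap.ker p →
    ∃ r : E →ₗ[R] M, r.comp i = LinearMap.id

section helpers
variable {R} {A B C W : Type u} [AddCommGroup A] [Module R A] [AddCommGroup B] [Module R B]
  [AddCommGroup C] [Module R C] [AddCommGroup W] [Module R W]

/-- Factor a linear map through a surjection whose kernel it kills. -/
noncomputable def factorMap (p : A →ₗ[R] B) (hp : Surjective p) (f : A →ₗ[R] W)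
    (h : LinearMap.ker p ≤ LinearMap.ker f) : B →ₗ[R] W :=
  ((LinearMap.ker p).liftQ f h) ∘ₗ (p.quotKerEquivOfSurjective hp).symm.toLinearMap

lemma factorMap_apply (p : A →ₗ[R] B) (hp : Surjective p) (f : A →ₗ[R] W)
    (h : LinearMap.ker p ≤ LinearMap.ker f) (a : A) : factorMap p hp f h (p a) = f a := by
  have h1 : (p.quotKerEquivOfSurjective hp).symm (p a) = Submodule.Quotient.mk a := by
    rw [LinearEquiv.symm_apply_eq]
    rfl
  simp [factorMap, h1]

lemma section_of_retraction (i : A →ₗ[R] B) (q : B →ₗ[R] C) (hq : Surjective q)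
    (hrange : LinearMap.range i = LinearMap.ker q) (r : B →ₗ[R] A) (hr : r ∘ₗ i = LinearMap.id) :
    ∃ s : C →ₗ[R] B, q ∘ₗ s = LinearMap.id := by
  have hker : LinearMap.ker q ≤ LinearMap.ker (LinearMap.id - i ∘ₗ r) := by
    intro b hb
    rw [← hrange] at hb
    obtain ⟨a, rfl⟩ := hb
    have : r (i a) = a := LinearMap.congr_fun hr a
    simp [LinearMap.mem_ker, this]
  refine ⟨factorMap q hq (LinearMap.id - i ∘ₗ r) hker, ?_⟩
  ext c
  obtain ⟨b, rfl⟩ := hq c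
  have h1 := factorMap_apply q hq (LinearMap.id - i ∘ₗ r) hker b
  have h2 : q (i (r b)) = 0 := by
    have : i (r b) ∈ LinearMap.ker q := hrange ▸ LinearMap.mem_range_self i (r b)
    simpa using this
  simp [h1, h2]

lemma sub_section_mem_range (i : A →ₗ[R] B) (q : B →ₗ[R] C)
    (hrange : LinearMap.range i = LinearMap.ker q) (s : C →ₗ[R] B)
    (hs : q ∘ₗ s = LinearMap.id) :
    ∀ b, (LinearMap.id - s ∘ₗ q : B →ₗ[R] B) b ∈ LinearMap.range i := by
  intro b
  rw [hrange]
  have : q (s (q b)) = q b := LinearMap.congr_fun hs (q b)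
  simp [LinearMap.mem_ker, this]

noncomputable def retractionOfSection (i : A →ₗ[R] B) (q : B →ₗ[R] C) (hi : Injective i)
    (hrange : LinearMap.range i = LinearMap.ker q) (s : C →ₗ[R] B)
    (hs : q ∘ₗ s = LinearMap.id) : B →ₗ[R] A :=
  (LinearEquiv.ofInjective i hi).symm.toLinearMap ∘ₗ
    LinearMap.codRestrict (LinearMap.range i) (LinearMap.id - s ∘ₗ q)
      (sub_section_mem_range i q hrange s hs)

lemma retractionOfSection_comp (i : A →ₗ[R] B) (q : B →ₗ[R] C) (hi : Injective i)
    (hrange : LinearMap.range i = LinearMap.ker q) (s : C →ₗ[R] B)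
    (hs : q ∘ₗ s = LinearMap.id) :
    (retractionOfSection i q hi hrange s hs) ∘ₗ i = LinearMap.id := by
  ext a
  have hq0 : q (i a) = 0 := by
    have : i a ∈ LinearMap.ker q := hrange ▸ LinearMap.mem_range_self i a
    simpa using this
  simp only [LinearMap.comp_apply, LinearMap.id_apply, retractionOfSection, LinearEquiv.coe_coe]
  have key : (LinearMap.codRestrict (LinearMap.range i) (LinearMap.id - s ∘ₗ q)
      (sub_section_mem_range i q hrange s hs)) (i a) = LinearEquiv.ofInjective i hi a := by
    apply Subtype.ext
    simp [hq0, LinearEquiv.ofInjective_apply]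
  rw [key, LinearEquiv.symm_apply_apply]

end helpers

/-- A short exact sequence ending in a finite product of modules from `𝒩`, with
`𝒩`-saturated kernel, admits a section. -/
lemma pi_section (𝒩 : Set (ModuleCat.{u} R)) {ι : Type u} [Fintype ι]
    (X : ι → ModuleCat.{u} R) (hX : ∀ j, X j ∈ 𝒩)
    (M : ModuleCat.{u} R) (hM : SaturatedFor R 𝒩 M)
    {E : Type u} [AddCommGroup E] [Module R E]
    (i : M →ₗ[R] E) (p : E →ₗ[R] ∀ j, X j)
    (hi : Injective i) (hp : Surjective p)
    (hrange : LinearMap.range i = LinearMap.ker p) :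
    ∃ s : (∀ j, X j) →ₗ[R] E, p ∘ₗ s = LinearMap.id := by
  classical
  have key : ∀ j : ι, ∃ t : (X j : Type u) →ₗ[R] E,
      p ∘ₗ t = LinearMap.single R (fun j => (X j : Type u)) j := by
    intro j
    -- fiber product of p and the inclusion of X j
    set d : E × (X j : Type u) →ₗ[R] ∀ k, (X k : Type u) :=
      p ∘ₗ LinearMap.fst R E (X j) -
        (LinearMap.single R (fun k => (X k : Type u)) j) ∘ₗ LinearMap.snd R E (X j) with hd
    set K : Submodule R (E × (X j : Type u)) := LinearMap.ker d with hK
    have memK : ∀ z : E × (X j : Type u), z ∈ K ↔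
        p z.1 = LinearMap.single R (fun k => (X k : Type u)) j z.2 := by
      intro z
      simp [hK, hd, LinearMap.mem_ker, sub_eq_zero]
    have hiK0 : ∀ m : M, (i m, (0 : X j)) ∈ K := by
      intro m
      rw [memK]
      have : p (i m) = 0 := by
        have : i m ∈ LinearMap.ker p := hrange ▸ LinearMap.mem_range_self i m
        simpa using this
      simp [this]
    set iK : M →ₗ[R] K := LinearMap.codRestrict K
      ((LinearMap.inl R E (X j)) ∘ₗ i) (fun m => hiK0 m) with hiK
    set pK : K →ₗ[R] (X j : Type u) := (LinearMap.snd R E (X j)) ∘ₗ K.subtype with hpK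
    have hiKinj : Injective iK := by
      intro a b hab
      apply hi
      have := congrArg (fun z : K => (z : E × (X j : Type u)).1) hab
      exact this
    have hpKsurj : Surjective pK := by
      intro x
      obtain ⟨e, he⟩ := hp (LinearMap.single R (fun k => (X k : Type u)) j x)
      exact ⟨⟨(e, x), (memK _).2 (by simpa using he)⟩, rfl⟩
    have hrangeK : LinearMap.range iK = LinearMap.ker pK := by
      apply le_antisymm
      · rintro _ ⟨m, rfl⟩
        simp [hiK, hpK, LinearMap.mem_ker]
        rfl
      · rintro ⟨⟨e, x⟩, hz⟩ hzker
        have hx : x = 0 := by simpa [hpK] using hzker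
        subst hx
        have hpe : p e = 0 := by simpa using (memK (e, 0)).1 hz
        have : e ∈ LinearMap.range i := hrange ▸ hpe
        obtain ⟨m, rfl⟩ := this
        exact ⟨m, Subtype.ext rfl⟩
    obtain ⟨r, hr⟩ := hM (X j) (hX j) (ModuleCat.of R K) iK pK hiKinj hpKsurj hrangeK
    obtain ⟨s, hs⟩ := section_of_retraction iK pK hpKsurj hrangeK r hr
    refine ⟨(LinearMap.fst R E (X j)) ∘ₗ K.subtype ∘ₗ s, LinearMap.ext fun x => ?_⟩
    have hmem := (memK (s x : E × (X j : Type u))).1 (s x).2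
    have hsnd : ((s x : E × (X j : Type u))).2 = x := LinearMap.congr_fun hs x
    simp only [LinearMap.comp_apply, Submodule.coe_subtype, LinearMap.fst_apply]
    rw [hmem, hsnd]
  choose t ht using key
  refine ⟨∑ j, (t j) ∘ₗ LinearMap.proj j, LinearMap.ext fun v => ?_⟩
  simp only [LinearMap.comp_apply, LinearMap.sum_apply, LinearMap.id_apply,
    LinearMap.proj_apply]
  rw [map_sum]
  have h1 : ∀ j, p ((t j) (v j)) = LinearMap.single R (fun k => (X k : Type u)) j (v j) := by
    intro j
    exact LinearMap.congr_fun (ht j) (v j)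
  simp only [h1, LinearMap.coe_single]
  exact Finset.univ_sum_single v

/-- Over a hereditary ring, a quotient of an `𝒩`-saturated module is `𝒩`-saturated. -/
lemma saturated_of_surjective (hher : IsHereditaryRing R) (𝒩 : Set (ModuleCat.{u} R))
    (M M' : ModuleCat.{u} R) (hM : SaturatedFor R 𝒩 M) (g : M →ₗ[R] M')
    (hg : Surjective g) : SaturatedFor R 𝒩 M' := by
  classical
  intro N hN E i p hi hp hrange
  -- free presentation of N
  set P : Type u := ((N : Type u) →₀ R) with hP
  set ε : P →ₗ[R] (N : Type u) := Finsupp.linearCombination R (fun n : (N : Type u) => n) with hε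
  have hεsurj : Surjective ε := by
    intro n
    exact ⟨Finsupp.single n 1, by rw [hε, Finsupp.linearCombination_single, one_smul]⟩
  have hPproj : Module.Projective R P := inferInstance
  set Q : Submodule R P := LinearMap.ker ε with hQ
  haveI hQproj : Module.Projective R Q := hher (ModuleCat.of R P) hPproj Q
  -- lift ε along p
  obtain ⟨φ, hφ⟩ := Module.projective_lifting_property p ε hp
  -- φ maps Q into range i = ker p
  have hφQ : ∀ x : Q, φ (x : P) ∈ LinearMap.range i := by
    intro x
    rw [hrange]
    have : ε (x : P) = 0 := x.2
    have h2 : p (φ (x : P)) = ε (x : P) := LinearMap.congr_fun hφ (x : P)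
    simp [LinearMap.mem_ker, h2, this]
  set ψ : Q →ₗ[R] M' := (LinearEquiv.ofInjective i hi).symm.toLinearMap ∘ₗ
    LinearMap.codRestrict (LinearMap.range i) (φ ∘ₗ Q.subtype) (fun x => hφQ x) with hψ
  have hiψ : ∀ x : Q, i (ψ x) = φ (x : P) := by
    intro x
    have : (LinearEquiv.ofInjective i hi) (ψ x) =
        ⟨φ (x : P), hφQ x⟩ := by
      simp only [hψ, LinearMap.comp_apply, LinearEquiv.coe_coe,
        LinearEquiv.apply_symm_apply]
      rfl
    have h2 := congrArg (fun z : LinearMap.range i => (z : E)) this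
    simpa [LinearEquiv.ofInjective_apply] using h2
  -- lift ψ along g
  obtain ⟨h, hh⟩ := Module.projective_lifting_property g ψ hg
  -- pushout F
  set t : Q →ₗ[R] Prod (M : Type u) P := LinearMap.prod h (-Q.subtype) with ht
  set T : Submodule R (Prod (M : Type u) P) := LinearMap.range t with hT
  set jF : (M : Type u) →ₗ[R] ((Prod (M : Type u) P) ⧸ T) := T.mkQ ∘ₗ LinearMap.inl R (M : Type u) P with hjF
  have hTker : T ≤ LinearMap.ker (ε ∘ₗ LinearMap.snd R (M : Type u) P) := by
    rintro _ ⟨x, rfl⟩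
    have : ε (x : P) = 0 := x.2
    simp [ht, LinearMap.mem_ker, this]
  set qF : ((Prod (M : Type u) P) ⧸ T) →ₗ[R] (N : Type u) := T.liftQ (ε ∘ₗ LinearMap.snd R (M : Type u) P) hTker
    with hqF
  have hjFinj : Injective jF := by
    rw [← LinearMap.ker_eq_bot]
    rw [Submodule.eq_bot_iff]
    intro m hm
    simp only [hjF, LinearMap.mem_ker, LinearMap.comp_apply, LinearMap.inl_apply] at hm
    rw [Submodule.mkQ_apply, Submodule.Quotient.mk_eq_zero] at hm
    obtain ⟨x, hx⟩ := hm
    have hx2 : -(x : P) = 0 := congrArg Prod.snd hx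
    have hx0 : x = 0 := by
      apply Subtype.ext
      simpa using hx2
    have hx1 : h x = m := congrArg Prod.fst hx
    rw [hx0] at hx1
    simpa using hx1.symm
  have hqFsurj : Surjective qF := by
    intro n
    obtain ⟨y, hy⟩ := hεsurj n
    exact ⟨T.mkQ (0, y), by simp [hqF, Submodule.mkQ_apply, Submodule.liftQ_apply, hy]⟩
  have hrangeF : LinearMap.range jF = LinearMap.ker qF := by
    apply le_antisymm
    · rintro _ ⟨m, rfl⟩
      simp [hjF, hqF, LinearMap.mem_ker, Submodule.mkQ_apply, Submodule.liftQ_apply]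
    · intro z hz
      obtain ⟨⟨m, y⟩, rfl⟩ := T.mkQ_surjective z
      have hy : ε y = 0 := by simpa [hqF, LinearMap.mem_ker] using hz
      set x : Q := ⟨y, hy⟩ with hx
      refine ⟨m + h x, ?_⟩
      simp only [hjF, LinearMap.comp_apply, LinearMap.inl_apply, Submodule.mkQ_apply]
      rw [Submodule.Quotient.eq]
      exact ⟨x, by simp [ht, hx]⟩
  -- the pushed-out sequence splits since M is saturated
  obtain ⟨rF, hrF⟩ := hM N hN (ModuleCat.of R ((Prod (M : Type u) P) ⧸ T)) jF qF hjFinj hqFsurj hrangeF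
  obtain ⟨sF, hsF⟩ := section_of_retraction jF qF hqFsurj hrangeF rF hrF
  -- map F → E
  have hTkerθ : T ≤ LinearMap.ker
      ((i ∘ₗ g ∘ₗ LinearMap.fst R (M : Type u) P) + (φ ∘ₗ LinearMap.snd R (M : Type u) P)) := by
    rintro _ ⟨x, rfl⟩
    have h1 : g (h x) = ψ x := LinearMap.congr_fun hh x
    simp [ht, LinearMap.mem_ker, h1, hiψ x]
  set θ : ((Prod (M : Type u) P) ⧸ T) →ₗ[R] E := T.liftQ
    ((i ∘ₗ g ∘ₗ LinearMap.fst R (M : Type u) P) + (φ ∘ₗ LinearMap.snd R (M : Type u) P))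
    hTkerθ with hθ
  have hpθ : p ∘ₗ θ = qF := by
    refine LinearMap.ext fun z => ?_
    obtain ⟨⟨m, y⟩, rfl⟩ := T.mkQ_surjective z
    have h1 : p (i (g m)) = 0 := by
      have : i (g m) ∈ LinearMap.ker p := hrange ▸ LinearMap.mem_range_self i (g m)
      simpa using this
    have h2 : p (φ y) = ε y := LinearMap.congr_fun hφ y
    simp [hθ, hqF, Submodule.liftQ_apply, h1, h2]
  -- section of the original sequence
  have hsec : p ∘ₗ (θ ∘ₗ sF) = LinearMap.id := by
    rw [← LinearMap.comp_assoc, hpθ, hsF]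
  exact ⟨retractionOfSection i p hi hrange (θ ∘ₗ sF) hsec,
    retractionOfSection_comp i p hi hrange (θ ∘ₗ sF) hsec⟩

/-- An extension of `𝒩`-saturated modules is `𝒩`-saturated. -/
lemma saturated_of_extension (𝒩 : Set (ModuleCat.{u} R)) (M' M M'' : ModuleCat.{u} R)
    (hs' : SaturatedFor R 𝒩 M') (hs'' : SaturatedFor R 𝒩 M'')
    (i : M' →ₗ[R] M) (p : M →ₗ[R] M'')
    (hi : Injective i) (hp : Surjective p)
    (hrange : LinearMap.range i = LinearMap.ker p) : SaturatedFor R 𝒩 M := by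
  intro N hN E j q hj hq hrangeq
  -- push out along p : quotient by S = range (j ∘ i)
  set S : Submodule R (E : Type u) := LinearMap.range (j ∘ₗ i) with hS
  have hSq : S ≤ LinearMap.ker q := by
    rintro _ ⟨m', rfl⟩
    have : j (i m') ∈ LinearMap.ker q := hrangeq ▸ LinearMap.mem_range_self j (i m')
    simpa using this
  set q'' : ((E : Type u) ⧸ S) →ₗ[R] (N : Type u) := S.liftQ q hSq with hq''
  have hkerp : LinearMap.ker p ≤ LinearMap.ker (S.mkQ ∘ₗ j) := by
    intro m hm
    rw [← hrange] at hm
    obtain ⟨m', rfl⟩ := hm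
    have : j (i m') ∈ S := LinearMap.mem_range_self (j ∘ₗ i) m'
    simpa [LinearMap.mem_ker, Submodule.Quotient.mk_eq_zero] using this
  set incl'' : (M'' : Type u) →ₗ[R] ((E : Type u) ⧸ S) := factorMap p hp (S.mkQ ∘ₗ j) hkerp
    with hincl''
  have hincl''p : ∀ m : M, incl'' (p m) = S.mkQ (j m) := fun m =>
    factorMap_apply p hp (S.mkQ ∘ₗ j) hkerp m
  have hincl''inj : Injective incl'' := by
    rw [← LinearMap.ker_eq_bot, Submodule.eq_bot_iff]
    intro z hz
    obtain ⟨m, rfl⟩ := hp z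
    rw [LinearMap.mem_ker, hincl''p] at hz
    rw [Submodule.mkQ_apply, Submodule.Quotient.mk_eq_zero] at hz
    obtain ⟨m', hm'⟩ := hz
    have : m = i m' := hj (by simpa using hm'.symm)
    rw [this]
    have : i m' ∈ LinearMap.ker p := hrange ▸ LinearMap.mem_range_self i m'
    simpa using this
  have hq''surj : Surjective q'' := by
    intro n
    obtain ⟨e, he⟩ := hq n
    exact ⟨S.mkQ e, by simp [hq'', Submodule.mkQ_apply, Submodule.liftQ_apply, he]⟩
  have hrange'' : LinearMap.range incl'' = LinearMap.ker q'' := by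
    apply le_antisymm
    · rintro _ ⟨m'', rfl⟩
      obtain ⟨m, rfl⟩ := hp m''
      rw [LinearMap.mem_ker, hincl''p]
      have hqm : q (j m) = 0 := by
        have : j m ∈ LinearMap.ker q := hrangeq ▸ LinearMap.mem_range_self j m
        simpa using this
      simp [hq'', Submodule.mkQ_apply, Submodule.liftQ_apply, hqm]
    · intro z hz
      obtain ⟨e, rfl⟩ := S.mkQ_surjective z
      have hqe : q e = 0 := by
        simpa [hq'', Submodule.mkQ_apply, Submodule.liftQ_apply, LinearMap.mem_ker] using hz
      have : e ∈ LinearMap.range j := hrangeq ▸ hqe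
      obtain ⟨m, rfl⟩ := this
      exact ⟨p m, (hincl''p m).symm ▸ rfl⟩
  obtain ⟨r'', hr''⟩ := hs'' N hN (ModuleCat.of R ((E : Type u) ⧸ S)) incl'' q''
    hincl''inj hq''surj hrange''
  obtain ⟨s'', hs''sec⟩ := section_of_retraction incl'' q'' hq''surj hrange'' r'' hr''
  -- pull back : E₁ = preimage of the image of the section
  set E₁ : Submodule R (E : Type u) := (LinearMap.range s'').comap S.mkQ with hE₁
  have hmemE₁ : ∀ m' : M', j (i m') ∈ E₁ := by
    intro m'
    have h0 : S.mkQ (j (i m')) = 0 := by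
      rw [Submodule.mkQ_apply, Submodule.Quotient.mk_eq_zero]
      exact LinearMap.mem_range_self (j ∘ₗ i) m'
    simp only [hE₁, Submodule.mem_comap, h0]
    exact ⟨0, map_zero s''⟩
  set i₁ : (M' : Type u) →ₗ[R] E₁ := LinearMap.codRestrict E₁ (j ∘ₗ i) hmemE₁ with hi₁
  set q₁ : E₁ →ₗ[R] (N : Type u) := q ∘ₗ E₁.subtype with hq₁
  have hi₁inj : Injective i₁ := by
    intro a b hab
    apply hi
    apply hj
    have := congrArg (fun z : E₁ => (z : E)) hab
    simpa [hi₁] using this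
  have hq₁surj : Surjective q₁ := by
    intro n
    obtain ⟨z, hz⟩ : ∃ z, S.mkQ z = s'' n := S.mkQ_surjective (s'' n)
    refine ⟨⟨z, by simp [hE₁, hz]⟩, ?_⟩
    have : q'' (S.mkQ z) = q z := by simp [hq'', Submodule.mkQ_apply, Submodule.liftQ_apply]
    have h2 : q'' (s'' n) = n := by simpa using LinearMap.congr_fun hs''sec n
    simp only [hq₁, LinearMap.comp_apply, Submodule.coe_subtype]
    rw [← this, hz]
    exact h2
  have hrange₁ : LinearMap.range i₁ = LinearMap.ker q₁ := by
    apply le_antisymm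
    · rintro _ ⟨m', rfl⟩
      have : q (j (i m')) = 0 := by
        have : j (i m') ∈ LinearMap.ker q := hrangeq ▸ LinearMap.mem_range_self j (i m')
        simpa using this
      simp [hi₁, hq₁, LinearMap.mem_ker, this]
    · rintro ⟨e, he⟩ hker
      have hqe : q e = 0 := by simpa [hq₁, LinearMap.mem_ker] using hker
      have : e ∈ LinearMap.range j := hrangeq ▸ hqe
      obtain ⟨m, rfl⟩ := this
      obtain ⟨n, hn⟩ : S.mkQ (j m) ∈ LinearMap.range s'' := he
      have hq''jm : q'' (S.mkQ (j m)) = 0 := by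
        simp [hq'', Submodule.mkQ_apply, Submodule.liftQ_apply, hqe]
      have hn0 : n = 0 := by
        have hthis : q'' (s'' n) = n := by simpa using LinearMap.congr_fun hs''sec n
        rw [← hthis, hn]
        exact hq''jm
      have hjm : j m ∈ S := by
        rw [← Submodule.Quotient.mk_eq_zero, ← Submodule.mkQ_apply, ← hn, hn0, map_zero]
      obtain ⟨m', hm'⟩ := hjm
      refine ⟨m', Subtype.ext ?_⟩
      simpa [hi₁] using hm'
  obtain ⟨r₁, hr₁⟩ := hs' N hN (ModuleCat.of R E₁) i₁ q₁ hi₁inj hq₁surj hrange₁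
  obtain ⟨s₁, hs₁⟩ := section_of_retraction i₁ q₁ hq₁surj hrange₁ r₁ hr₁
  have hsec : q ∘ₗ (E₁.subtype ∘ₗ s₁) = LinearMap.id := by
    rw [← LinearMap.comp_assoc]
    exact hs₁
  exact ⟨retractionOfSection j q hj hrangeq (E₁.subtype ∘ₗ s₁) hsec,
    retractionOfSection_comp j q hj hrangeq (E₁.subtype ∘ₗ s₁) hsec⟩

/-- An extension of an `𝒩`-generated module by an `𝒩`-generated module with
`𝒩`-saturated kernel is `𝒩`-generated. -/
lemma generated_of_extension (𝒩 : Set (ModuleCat.{u} R)) (M' M M'' : ModuleCat.{u} R)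
    (hg' : GeneratedByClass R 𝒩 M') (hs' : SaturatedFor R 𝒩 M')
    (hg'' : GeneratedByClass R 𝒩 M'')
    (i : M' →ₗ[R] M) (p : M →ₗ[R] M'')
    (hi : Injective i) (hp : Surjective p)
    (hrange : LinearMap.range i = LinearMap.ker p) : GeneratedByClass R 𝒩 M := by
  obtain ⟨ι', inst', X', hX', f', hf'⟩ := hg'
  obtain ⟨ι'', inst'', X'', hX'', f'', hf''⟩ := hg''
  haveI := inst'
  haveI := inst''
  set P'' : Type u := ∀ b, (X'' b : Type u) with hP''
  -- pull back the sequence along f''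
  set d : Prod (M : Type u) P'' →ₗ[R] (M'' : Type u) :=
    p ∘ₗ LinearMap.fst R (M : Type u) P'' - f'' ∘ₗ LinearMap.snd R (M : Type u) P'' with hd
  set E₀ : Submodule R (Prod (M : Type u) P'') := LinearMap.ker d with hE₀
  have memE₀ : ∀ z : Prod (M : Type u) P'', z ∈ E₀ ↔ p z.1 = f'' z.2 := by
    intro z
    simp [hE₀, hd, LinearMap.mem_ker, sub_eq_zero]
  have hmem0 : ∀ m' : M', ((i m', 0) : Prod (M : Type u) P'') ∈ E₀ := by
    intro m'
    rw [memE₀]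
    have hpim : p (i m') = 0 := by
      have : i m' ∈ LinearMap.ker p := hrange ▸ LinearMap.mem_range_self i m'
      simpa using this
    simp [hpim]
  set i₀ : (M' : Type u) →ₗ[R] E₀ :=
    LinearMap.codRestrict E₀ (LinearMap.inl R (M : Type u) P'' ∘ₗ i) hmem0 with hi₀
  set p₀ : E₀ →ₗ[R] P'' := LinearMap.snd R (M : Type u) P'' ∘ₗ E₀.subtype with hp₀
  have hi₀inj : Injective i₀ := by
    intro a b hab
    apply hi
    have := congrArg (fun z : E₀ => (z : Prod (M : Type u) P'').1) hab
    exact this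
  have hp₀surj : Surjective p₀ := by
    intro v
    obtain ⟨m, hm⟩ := hp (f'' v)
    exact ⟨⟨(m, v), (memE₀ _).2 (by simpa using hm)⟩, rfl⟩
  have hrange₀ : LinearMap.range i₀ = LinearMap.ker p₀ := by
    apply le_antisymm
    · rintro _ ⟨m', rfl⟩
      simp [hi₀, hp₀, LinearMap.mem_ker]
      rfl
    · rintro ⟨⟨m, v⟩, hz⟩ hzker
      have hv : v = 0 := by simpa [hp₀] using hzker
      subst hv
      have hpm : p m = 0 := by simpa using (memE₀ (m, 0)).1 hz
      have : m ∈ LinearMap.range i := hrange ▸ hpm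
      obtain ⟨m', rfl⟩ := this
      exact ⟨m', Subtype.ext rfl⟩
  obtain ⟨s₀, hs₀⟩ := pi_section R 𝒩 X'' hX'' M' hs' i₀ p₀ hi₀inj hp₀surj hrange₀
  set u : P'' →ₗ[R] (M : Type u) :=
    LinearMap.fst R (M : Type u) P'' ∘ₗ E₀.subtype ∘ₗ s₀ with hu
  have hpu : ∀ v : P'', p (u v) = f'' v := by
    intro v
    have hmem := (memE₀ ((s₀ v : E₀) : Prod (M : Type u) P'')).1 (s₀ v).2
    have hsnd : ((s₀ v : E₀) : Prod (M : Type u) P'').2 = v := LinearMap.congr_fun hs₀ v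
    simp only [hu, LinearMap.comp_apply, Submodule.coe_subtype, LinearMap.fst_apply]
    rw [hmem, hsnd]
  -- assemble the generating family
  refine ⟨Sum ι' ι'', inferInstance, Sum.elim X' X'', ?_, ?_⟩
  · rintro (a | b)
    · exact hX' a
    · exact hX'' b
  · set πl : (∀ c, ((Sum.elim X' X'' c : ModuleCat.{u} R) : Type u)) →ₗ[R] ∀ a, (X' a : Type u) :=
      LinearMap.pi (fun a => LinearMap.proj (R := R) (φ := fun c => ((Sum.elim X' X'' c : ModuleCat.{u} R) : Type u)) (Sum.inl a)) with hπl
    set πr : (∀ c, ((Sum.elim X' X'' c : ModuleCat.{u} R) : Type u)) →ₗ[R] P'' :=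
      LinearMap.pi (fun b => LinearMap.proj (R := R) (φ := fun c => ((Sum.elim X' X'' c : ModuleCat.{u} R) : Type u)) (Sum.inr b)) with hπr
    refine ⟨(i ∘ₗ f' ∘ₗ πl) + (u ∘ₗ πr), ?_⟩
    intro m
    obtain ⟨v'', hv''⟩ := hf'' (p m)
    have hpz : p (m - u v'') = 0 := by
      rw [map_sub, hpu, hv'', sub_self]
    have : m - u v'' ∈ LinearMap.range i := hrange ▸ hpz
    obtain ⟨m'0, hm'0⟩ := this
    obtain ⟨v', hv'⟩ := hf' m'0
    refine ⟨fun c => Sum.rec (motive := fun c => ((Sum.elim X' X'' c : ModuleCat.{u} R) : Type u))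
      (fun a => v' a) (fun b => v'' b) c, ?_⟩
    have hl : πl (fun c => Sum.rec (motive := fun c => ((Sum.elim X' X'' c : ModuleCat.{u} R) : Type u))
        (fun a => v' a) (fun b => v'' b) c) = v' := rfl
    have hr : πr (fun c => Sum.rec (motive := fun c => ((Sum.elim X' X'' c : ModuleCat.{u} R) : Type u))
        (fun a => v' a) (fun b => v'' b) c) = v'' := rfl
    simp only [LinearMap.add_apply, LinearMap.comp_apply, hl, hr, hv', hm'0]
    abel

/-- Over a hereditary artin algebra, the class of modules which are both
generated by `𝒩` and `𝒩`-saturated is closed under quotient modules and under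
extensions. -/
theorem generated_and_saturated_closed (R : Type u) [Ring R] [IsArtinianRing R]
    (hher : IsHereditaryRing R) (𝒩 : Set (ModuleCat.{u} R)) :
    -- closed under quotients
    (∀ (M M' : ModuleCat.{u} R),
      GeneratedByClass R 𝒩 M → SaturatedFor R 𝒩 M →
      ∀ g : M →ₗ[R] M', Surjective g →
        GeneratedByClass R 𝒩 M' ∧ SaturatedFor R 𝒩 M') ∧
    -- closed under extensions
    (∀ (M' M M'' : ModuleCat.{u} R),
      GeneratedByClass R 𝒩 M' → SaturatedFor R 𝒩 M' →
      GeneratedByClass R 𝒩 M'' → SaturatedFor R 𝒩 M'' →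
      ∀ (i : M' →ₗ[R] M) (p : M →ₗ[R] M''),
        Injective i → Surjective p → LinearMap.range i = LinearMap.ker p →
        GeneratedByClass R 𝒩 M ∧ SaturatedFor R 𝒩 M) := by
  constructor
  · intro M M' hgen hsat g hg
    constructor
    · obtain ⟨ι, inst, X, hX, f, hf⟩ := hgen
      exact ⟨ι, inst, X, hX, g ∘ₗ f, hg.comp hf⟩
    · exact saturated_of_surjective R hher 𝒩 M M' hsat g hg
  · intro M' M M'' hg' hs' hg'' hs'' i p hi hp hrange
    exact ⟨generated_of_extension R 𝒩 M' M M'' hg' hs' hg'' i p hi hp hrange,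
      saturated_of_extension R 𝒩 M' M M'' hs' hs'' i p hi hp hrange⟩
end
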